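/- Let s, k, L be positive integers. Suppose (ρ_{i,j})_{1≤i<j≤ks} are random variables over a probability space Ω with values in the unit circle, and U₁,…,U_{ks} is a (ρ_{i,j})-commuting family of random unitaries in a separable C*-probability space (A,φ) which is an L-mimic of a Haar family. Define X_r := (1/√k)(U_r + U_{r+s} + ⋯ + U_{r+(k-1)s}) for 1 ≤ r ≤ s. Then for every odd positive integer n < L, every r₁,…,r_n ∈ {1,…,s} and every ε(1),…,ε(n) ∈ {1,*}, one has E(X_{r₁}^{ε(1)}⋯X_{r_n}^{ε(n)}) = 0. -/

import Mathlib

open MeasureTheory ProbabilityTheory Filter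

noncomputable section

/-- The element `r + i·s` of `{0, …, ks-1}`, used to select the summands of
`X_r = (1/√k)(U_r + U_{r+s} + ⋯ + U_{r+(k-1)s})`. -/
def idx {s k : ℕ} (r : Fin s) (i : Fin k) : Fin (k * s) :=
  ⟨r.val + i.val * s, by
    have h1 := r.isLt
    have h2 := i.isLt
    calc r.val + i.val * s < s + i.val * s := by omega
      _ = (i.val + 1) * s := by ring
      _ ≤ k * s := Nat.mul_le_mul_right s h2⟩

/-- The averaged elements `X_r := (1/√k)(U_r + U_{r+s} + ⋯ + U_{r+(k-1)s})`,
as functions on `Ω`. -/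
def Xavg {Ω : Type*} {A : Type*} [Ring A] [StarRing A] [Module ℂ A]
    {s : ℕ} (k : ℕ) (U : Fin (k * s) → Ω → unitary A) (r : Fin s) (ω : Ω) : A :=
  ((Real.sqrt k : ℂ))⁻¹ • ∑ i : Fin k, (U (idx r i) ω : A)

/-- The joint ∗-moment `E(X_{r₁}^{ε(1)} ⋯ X_{r_n}^{ε(n)})`, where
`E(f) = ∫_Ω φ(f(ω)) dP(ω)`; the value `ε m = true` encodes the symbol `1`
and `ε m = false` encodes the symbol `*` (the adjoint). -/
def momentE {Ω : Type*} [MeasurableSpace Ω] (P : Measure Ω)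
    {A : Type*} [Ring A] [StarRing A] [Module ℂ A] (φ : A →ₗ[ℂ] ℂ)
    {s : ℕ} (k : ℕ) (U : Fin (k * s) → Ω → unitary A)
    {n : ℕ} (r : Fin n → Fin s) (ε : Fin n → Bool) : ℂ :=
  ∫ ω, φ ((List.ofFn fun m : Fin n =>
      if ε m then Xavg k U (r m) ω else star (Xavg k U (r m) ω)).prod) ∂P



section QCsec
variable {A : Type*} [Ring A] [StarRing A] [Module ℂ A] [IsScalarTower ℂ A A] [SMulCommClass ℂ A A]

/-- quasi-commutation up to a nonzero complex scalar -/
def QC (a b : A) : Prop := ∃ w : ℂ, w ≠ 0 ∧ a * b = w • (b * a)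

lemma QC.symm {a b : A} (h : QC a b) : QC b a := by
  obtain ⟨w, hw, h⟩ := h
  refine ⟨w⁻¹, inv_ne_zero hw, ?_⟩
  rw [h, smul_smul, inv_mul_cancel₀ hw, one_smul]

lemma QC.one_right (a : A) : QC a 1 := ⟨1, one_ne_zero, by simp⟩

lemma QC.mul_right {a b c : A} (hb : QC a b) (hc : QC a c) : QC a (b * c) := by
  obtain ⟨w, hw, hb⟩ := hb
  obtain ⟨w', hw', hc⟩ := hc
  refine ⟨w * w', mul_ne_zero hw hw', ?_⟩
  calc a * (b * c) = (a * b) * c := by rw [mul_assoc]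
    _ = w • (b * (a * c)) := by rw [hb, smul_mul_assoc, mul_assoc]
    _ = w • (b * (w' • (c * a))) := by rw [hc]
    _ = (w * w') • (b * c * a) := by rw [mul_smul_comm, smul_smul, mul_assoc]

lemma QC.pow_right {a b : A} (h : QC a b) (n : ℕ) : QC a (b ^ n) := by
  induction n with
  | zero => simpa using QC.one_right a
  | succ n ih => rw [pow_succ]; exact ih.mul_right h

lemma QC.units_inv_right {a : A} {b : Aˣ} (h : QC a ↑b) : QC a (↑b⁻¹ : A) := by
  obtain ⟨w, hw, h⟩ := h
  refine ⟨w⁻¹, inv_ne_zero hw, ?_⟩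
  have key : (↑b⁻¹ : A) * a = w • (a * ↑b⁻¹) := by
    calc (↑b⁻¹ : A) * a = ↑b⁻¹ * (a * ↑b * ↑b⁻¹) := by rw [Units.mul_inv_cancel_right]
      _ = ↑b⁻¹ * (w • ((↑b : A) * a) * ↑b⁻¹) := by rw [h]
      _ = w • (a * ↑b⁻¹) := by
          rw [smul_mul_assoc, mul_smul_comm, ← mul_assoc, Units.inv_mul_cancel_left]
  rw [key, smul_smul, inv_mul_cancel₀ hw, one_smul]

lemma QC.unitary_inv_right {a : A} {b : unitary A} (h : QC a ↑b) : QC a (↑(b⁻¹) : A) := by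
  have h2 : QC a ↑(Unitary.toUnits b)⁻¹ := QC.units_inv_right (by simpa using h)
  simpa using h2

lemma QC.unitary_zpow_right {a : A} {b : unitary A} (h : QC a ↑b) (m : ℤ) :
    QC a ((b ^ m : unitary A) : A) := by
  cases m with
  | ofNat n =>
      have : ((b ^ (Int.ofNat n) : unitary A) : A) = (↑b : A) ^ n := by
        rw [Int.ofNat_eq_coe, zpow_natCast]; rfl
      rw [this]; exact h.pow_right n
  | negSucc n =>
      have : (b ^ (Int.negSucc n) : unitary A) = (b ^ (n + 1))⁻¹ := zpow_negSucc b n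
      rw [this]
      have hb : QC a ((b ^ (n+1) : unitary A) : A) := by
        have : ((b ^ (n+1) : unitary A) : A) = (↑b : A) ^ (n+1) := rfl
        rw [this]; exact h.pow_right (n+1)
      exact hb.unitary_inv_right

section NF
variable {ι : Type*} [DecidableEq ι]

/-- sign of a boolean exponent symbol -/
def sgn (b : Bool) : ℤ := if b then 1 else -1

/-- normal form product along a list of indices -/
def NFl (u : ι → unitary A) (is : List ι) (e : ι → ℤ) : A :=
  (is.map fun i => ((u i ^ e i : unitary A) : A)).prod

/-- exponent vector of a word -/
def expOf (l : List (ι × Bool)) (i : ι) : ℤ :=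
  (l.map fun p => if p.1 = i then sgn p.2 else 0).sum

lemma NFl_congr (u : ι → unitary A) (is : List ι) {e e' : ι → ℤ}
    (h : ∀ i ∈ is, e i = e' i) : NFl u is e = NFl u is e' := by
  unfold NFl
  congr 1
  exact List.map_congr_left fun i hi => by rw [h i hi]

lemma insert_lemma (u : ι → unitary A) (hQC : ∀ i j, QC ((u i : A)) ((u j : A)))
    (j : ι) (b : Bool) :
    ∀ (is : List ι), is.Nodup → j ∈ is → ∀ (e : ι → ℤ),
    ∃ w : ℂ, w ≠ 0 ∧ ((u j ^ sgn b : unitary A) : A) * NFl u is e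
      = w • NFl u is (fun i => (if j = i then sgn b else 0) + e i) := by
  intro is
  induction is with
  | nil => intro _ h; simp at h
  | cons a t ih =>
    intro hnd hj e
    have hnd' := hnd
    rw [List.nodup_cons] at hnd'
    rcases List.mem_cons.mp hj with rfl | hjt
    · -- head case
      refine ⟨1, one_ne_zero, ?_⟩
      rw [one_smul]
      have hmerge : ((u j ^ sgn b : unitary A) : A) * ((u j ^ e j : unitary A) : A)
          = ((u j ^ (sgn b + e j) : unitary A) : A) := by
        rw [← MulMemClass.coe_mul, ← zpow_add]
      have htail : NFl u t e = NFl u t (fun i => (if j = i then sgn b else 0) + e i) := by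
        refine NFl_congr u t fun i hi => ?_
        have : j ≠ i := fun h => hnd'.1 (h ▸ hi)
        simp [this]
      have hgoal : ((u j ^ (sgn b + e j) : unitary A) : A)
          = ((u j ^ ((if j = j then sgn b else 0) + e j) : unitary A) : A) := by norm_num
      unfold NFl at htail
      simp only [NFl, List.map_cons, List.prod_cons]
      rw [← mul_assoc, hmerge, hgoal, htail]
      simp
    · -- tail case
      have haj : j ≠ a := fun h => hnd'.1 (h ▸ hjt)
      obtain ⟨w1, hw1, hcomm⟩ :
          QC ((u j ^ sgn b : unitary A) : A) ((u a ^ e a : unitary A) : A) :=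
        (((hQC a j).unitary_zpow_right (sgn b)).symm).unitary_zpow_right (e a)
      obtain ⟨w2, hw2, hrec⟩ := ih hnd'.2 hjt e
      refine ⟨w1 * w2, mul_ne_zero hw1 hw2, ?_⟩
      have hea : (if j = a then sgn b else 0) + e a = e a := by simp [haj]
      simp only [NFl, List.map_cons, List.prod_cons, hea]
      calc ((u j ^ sgn b : unitary A) : A) * (((u a ^ e a : unitary A) : A) * (NFl u t e))
          = (((u j ^ sgn b : unitary A) : A) * ((u a ^ e a : unitary A) : A)) * NFl u t e := by
            rw [mul_assoc]
        _ = w1 • (((u a ^ e a : unitary A) : A) * (((u j ^ sgn b : unitary A) : A) * NFl u t e)) := by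
            rw [hcomm, smul_mul_assoc, mul_assoc]
        _ = w1 • (((u a ^ e a : unitary A) : A) *
              (w2 • NFl u t (fun i => (if j = i then sgn b else 0) + e i))) := by rw [hrec]
        _ = (w1 * w2) • (((u a ^ e a : unitary A) : A) *
              NFl u t (fun i => (if j = i then sgn b else 0) + e i)) := by
            rw [mul_smul_comm, smul_smul]
  
lemma normal_form (u : ι → unitary A) (hQC : ∀ i j, QC ((u i : A)) ((u j : A)))
    (is : List ι) (hnd : is.Nodup) (hmem : ∀ i, i ∈ is) :
    ∀ (l : List (ι × Bool)), ∃ w : ℂ, w ≠ 0 ∧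
      (l.map fun p => ((u p.1 ^ sgn p.2 : unitary A) : A)).prod = w • NFl u is (expOf l) := by
  intro l
  induction l with
  | nil =>
    refine ⟨1, one_ne_zero, ?_⟩
    have : NFl u is (expOf ([] : List (ι × Bool))) = 1 := by
      unfold NFl
      have : ∀ i ∈ is, ((u i ^ expOf ([] : List (ι × Bool)) i : unitary A) : A) = 1 := by
        intro i _
        simp [expOf]
      rw [List.prod_eq_one]
      intro x hx
      obtain ⟨i, hi, rfl⟩ := List.mem_map.mp hx
      exact this i hi
    simp [this]
  | cons p t ih =>
    obtain ⟨w1, hw1, h1⟩ := ih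
    obtain ⟨w2, hw2, h2⟩ := insert_lemma u hQC p.1 p.2 is hnd (hmem p.1) (expOf t)
    refine ⟨w2 * w1, mul_ne_zero hw2 hw1, ?_⟩
    have hexp : (fun i => (if p.1 = i then sgn p.2 else 0) + expOf t i) = expOf (p :: t) := by
      funext i; simp [expOf]
    rw [List.map_cons, List.prod_cons, h1, mul_smul_comm, h2, smul_smul, hexp]
    rw [mul_comm w1 w2]

lemma expOf_natAbs_le (l : List (ι × Bool)) (i : ι) : (expOf l i).natAbs ≤ l.length := by
  induction l with
  | nil => simp [expOf]
  | cons p t ih =>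
    have : expOf (p :: t) i = (if p.1 = i then sgn p.2 else 0) + expOf t i := by
      simp [expOf]
    rw [this]
    refine le_trans (Int.natAbs_add_le _ _) ?_
    have h1 : (if p.1 = i then sgn p.2 else 0).natAbs ≤ 1 := by
      rcases eq_or_ne p.1 i with h | h <;> rcases Bool.eq_false_or_eq_true p.2 with hb | hb <;>
        simp [h, hb, sgn]
    simp only [List.length_cons]
    omega

lemma sum_expOf [Fintype ι] (l : List (ι × Bool)) :
    ∑ i : ι, expOf l i = (l.map fun p => sgn p.2).sum := by
  induction l with
  | nil => simp [expOf]
  | cons p t ih =>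
    have h : ∀ i, expOf (p :: t) i = (if p.1 = i then sgn p.2 else 0) + expOf t i := by
      intro i; simp [expOf]
    simp only [h]
    rw [Finset.sum_add_distrib, ih, Finset.sum_ite_eq]
    simp

lemma sum_sgn_parity (l : List (ι × Bool)) :
    Even ((l.map fun p => sgn p.2).sum - (l.length : ℤ)) := by
  induction l with
  | nil => simp
  | cons p t ih =>
    have h : ((p :: t).map fun p => sgn p.2).sum - ((p :: t).length : ℤ)
        = (sgn p.2 - 1) + ((t.map fun p => sgn p.2).sum - (t.length : ℤ)) := by
      simp [List.length_cons]
      push_cast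
      ring
    rw [h]
    refine Even.add ?_ ih
    rcases Bool.eq_false_or_eq_true p.2 with hb | hb <;> simp [hb, sgn]

end NF
end QCsec


section expand
variable {A : Type*} [Ring A] [Module ℂ A] [IsScalarTower ℂ A A] [SMulCommClass ℂ A A]

lemma ofFn_smul_prod (c : ℂ) : ∀ {n : ℕ} (F : Fin n → A),
    (List.ofFn fun m => c • F m).prod = c ^ n • (List.ofFn F).prod := by
  intro n
  induction n with
  | zero => intro F; simp
  | succ n ih =>
    intro F
    rw [List.ofFn_succ, List.ofFn_succ, List.prod_cons, List.prod_cons, ih,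
      smul_mul_assoc, mul_smul_comm, smul_smul, ← pow_succ']

lemma ofFn_sum_prod (k : ℕ) : ∀ {n : ℕ} (F : Fin n → Fin k → A),
    (List.ofFn fun m => ∑ i : Fin k, F m i).prod
      = ∑ f : Fin n → Fin k, (List.ofFn fun m => F m (f m)).prod := by
  intro n
  induction n with
  | zero => intro F; simp
  | succ n ih =>
    intro F
    rw [List.ofFn_succ, List.prod_cons, ih, Finset.sum_mul]
    rw [← Equiv.sum_comp (Fin.consEquiv fun _ : Fin (n+1) => Fin k)
      (fun f => (List.ofFn fun m => F m (f m)).prod), Fintype.sum_prod_type]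
    refine Finset.sum_congr rfl fun i _ => ?_
    rw [Finset.mul_sum]
    refine Finset.sum_congr rfl fun g _ => ?_
    rw [List.ofFn_succ, List.prod_cons]
    simp [Fin.consEquiv]

end expand

/-- **Proposition 1.6.2, part 1.** For a `(ρ_{i,j})`-commuting family of random
unitaries `U_1, …, U_{ks}` which is an `L`-mimic of a Haar family, all joint
∗-moments of the averages `X_1, …, X_s` of odd order `n < L` vanish. -/
theorem odd_moments_vanish
    (s k L : ℕ) (hs : 0 < s) (hk : 0 < k) (hL : 0 < L)
    -- the underlying probability space (Ω, P)
    (Ω : Type*) (mΩ : MeasurableSpace Ω)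
    (P : Measure Ω) (hP : IsProbabilityMeasure P)
    -- the separable C*-probability space (A, φ)
    (A : Type*) [NormedRing A] [StarRing A] [CStarRing A] [NormedAlgebra ℂ A]
    [StarModule ℂ A] [CompleteSpace A] [TopologicalSpace.SeparableSpace A]
    [MeasurableSpace A] [BorelSpace A]
    (φ : A →ₗ[ℂ] ℂ)
    (hφ1 : φ 1 = 1)
    (hφpos : ∀ a, 0 ≤ (φ (star a * a)).re ∧ (φ (star a * a)).im = 0)
    -- the unit-circle-valued random variables ρ_{i,j}
    (ρ : Fin (k * s) → Fin (k * s) → Ω → ℂ)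
    (hρmeas : ∀ i j, Measurable (ρ i j))
    (hρcirc : ∀ (i j : Fin (k * s)), i < j → ∀ ω, ‖ρ i j ω‖ = 1)
    -- a (ρ_{i,j})-commuting family of random unitaries U_1, …, U_{ks}
    -- which is an L-mimic of a Haar family
    (U : Fin (k * s) → Ω → unitary A)
    (hUmeas : ∀ i, Measurable fun ω => (U i ω : A))
    (hUcomm : ∀ (i j : Fin (k * s)), i < j → ∀ ω,
      (U i ω : A) * (U j ω) = ρ i j ω • ((U j ω : A) * (U i ω)))
    (hMimic : ∀ (lam : Fin (k * s) → ℤ), lam ≠ 0 → (∀ i, (lam i).natAbs < L) →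
      ∀ ω, φ ((List.ofFn fun i => ((U i ω ^ lam i : unitary A) : A)).prod) = 0) :
    ∀ (n : ℕ), Odd n → n < L → ∀ (r : Fin n → Fin s) (ε : Fin n → Bool),
      momentE P φ k U r ε = 0 := by
  intro n hodd hnL r ε
  set c : ℂ := ((Real.sqrt k : ℂ))⁻¹ with hc
  have key : ∀ ω, φ ((List.ofFn fun m : Fin n =>
      if ε m then Xavg k U (r m) ω else star (Xavg k U (r m) ω)).prod) = 0 := by
    intro ω
    have hQC : ∀ i j, QC ((U i ω : A)) ((U j ω : A)) := by
      intro i j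
      rcases lt_trichotomy i j with h | h | h
      · refine ⟨ρ i j ω, ?_, hUcomm i j h ω⟩
        intro h0
        have := hρcirc i j h ω
        rw [h0] at this
        simp at this
      · subst h; exact ⟨1, one_ne_zero, by rw [one_smul]⟩
      · refine QC.symm ⟨ρ j i ω, ?_, hUcomm j i h ω⟩
        intro h0
        have := hρcirc j i h ω
        rw [h0] at this
        simp at this
    have hinv : ∀ x : unitary A, ((x ^ (-1 : ℤ) : unitary A) : A) = star (x : A) := by
      intro x
      rw [zpow_neg_one, ← Unitary.star_eq_inv, Unitary.coe_star]
    have hX : ∀ m : Fin n,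
        (if ε m then Xavg k U (r m) ω else star (Xavg k U (r m) ω))
          = c • ∑ i : Fin k, ((U (idx (r m) i) ω ^ sgn (ε m) : unitary A) : A) := by
      intro m
      cases hε : ε m with
      | true =>
        rw [if_pos rfl, Xavg, ← hc]
        congr 1
        refine Finset.sum_congr rfl fun i _ => ?_
        rw [show sgn true = (1 : ℤ) from rfl, zpow_one]
      | false =>
        rw [if_neg Bool.false_ne_true, Xavg, star_smul, star_sum]
        have hcc : star ((Real.sqrt k : ℂ))⁻¹ = ((Real.sqrt k : ℂ))⁻¹ := by
          rw [star_inv₀, Complex.star_def, Complex.conj_ofReal]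
        rw [hcc, ← hc]
        congr 1
        refine Finset.sum_congr rfl fun i _ => ?_
        rw [show sgn false = (-1 : ℤ) from rfl, hinv]
    have hmono : ∀ f : Fin n → Fin k,
        φ ((List.ofFn fun m =>
          ((U (idx (r m) (f m)) ω ^ sgn (ε m) : unitary A) : A)).prod) = 0 := by
      intro f
      set l : List (Fin (k * s) × Bool) :=
        List.ofFn fun m => (idx (r m) (f m), ε m) with hl
      have hmap : (List.ofFn fun m =>
            ((U (idx (r m) (f m)) ω ^ sgn (ε m) : unitary A) : A))
          = l.map (fun p => (((fun i => U i ω) p.1 ^ sgn p.2 : unitary A) : A)) := by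
        rw [hl, List.map_ofFn]
        rfl
      obtain ⟨w, hw, hNF⟩ := normal_form (fun i => U i ω) hQC (List.finRange (k * s))
        (List.nodup_finRange _) (fun i => List.mem_finRange i) l
      have hlen : l.length = n := by rw [hl, List.length_ofFn]
      have hbound : ∀ i, (expOf l i).natAbs < L := by
        intro i
        have := expOf_natAbs_le l i
        omega
      have hne : expOf l ≠ 0 := by
        intro h0
        have hpar := sum_sgn_parity l
        rw [← sum_expOf, hlen] at hpar
        have hz : ∑ i : Fin (k * s), expOf l i = 0 := by simp [h0]
        rw [hz, zero_sub, even_neg, Int.even_coe_nat] at hpar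
        exact (Nat.not_even_iff_odd.mpr hodd) hpar
      have hzero : φ (NFl (fun i => U i ω) (List.finRange (k * s)) (expOf l)) = 0 := by
        have hNFl : NFl (fun i => U i ω) (List.finRange (k * s)) (expOf l)
            = (List.ofFn fun i => ((U i ω ^ expOf l i : unitary A) : A)).prod := by
          rw [NFl, List.ofFn_eq_map]
        rw [hNFl]
        exact hMimic (expOf l) hne hbound ω
      rw [hmap, hNF, φ.map_smul, hzero, smul_zero]
    calc φ ((List.ofFn fun m : Fin n =>
        if ε m then Xavg k U (r m) ω else star (Xavg k U (r m) ω)).prod)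
        = φ ((List.ofFn fun m : Fin n =>
            c • ∑ i : Fin k, ((U (idx (r m) i) ω ^ sgn (ε m) : unitary A) : A)).prod) := by
          exact congrArg φ (congrArg List.prod (congrArg List.ofFn (funext hX)))
      _ = φ (c ^ n • (List.ofFn fun m : Fin n =>
            ∑ i : Fin k, ((U (idx (r m) i) ω ^ sgn (ε m) : unitary A) : A)).prod) := by
          rw [ofFn_smul_prod]
      _ = c ^ n • φ ((List.ofFn fun m : Fin n =>
            ∑ i : Fin k, ((U (idx (r m) i) ω ^ sgn (ε m) : unitary A) : A)).prod) := by
          rw [φ.map_smul]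
      _ = c ^ n • φ (∑ f : Fin n → Fin k, (List.ofFn fun m =>
            ((U (idx (r m) (f m)) ω ^ sgn (ε m) : unitary A) : A)).prod) := by
          rw [ofFn_sum_prod]
      _ = c ^ n • ∑ f : Fin n → Fin k, φ ((List.ofFn fun m =>
            ((U (idx (r m) (f m)) ω ^ sgn (ε m) : unitary A) : A)).prod) := by
          rw [map_sum]
      _ = 0 := by
          rw [Finset.sum_congr rfl fun f _ => hmono f]
          simp
  unfold momentE
  simp only [key]
  simp
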